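/- Let T ⊆ R² be a closed convex set and R > r > 0. Let D(R, r) = R·B² \ r·B² be the closed annulus with inner radius r and outer radius R (B² the closed unit disk). Then the line integral of ||x||^{-1} over D(R, r) ∩ ∂T is at most 4π·⌈log₂(R/r)⌉. -/

import Mathlib

open MeasureTheory Metric Set Real
open scoped ENNReal NNReal

local notation "E" => EuclideanSpace ℝ (Fin 2)
local notation "⟪" x ", " y "⟫" => @inner ℝ _ _ x y

lemma proj_unique {K : Set E} {x v w : E} (hv : v ∈ K) (hw : w ∈ K)
    (h1 : ∀ y ∈ K, ⟪x - v, y - v⟫ ≤ 0) (h2 : ∀ y ∈ K, ⟪x - w, y - w⟫ ≤ 0) : v = w := by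
  have a := h1 w hw
  have b := h2 v hv
  have h0 : ⟪v - w, v - w⟫ ≤ 0 := by
    have : ⟪v - w, v - w⟫ = ⟪x - v, w - v⟫ + ⟪x - w, v - w⟫ := by
      simp only [inner_sub_left, inner_sub_right, real_inner_comm]
      ring
    linarith
  have h0' : ⟪v - w, v - w⟫ = 0 := le_antisymm h0 real_inner_self_nonneg
  have := inner_self_eq_zero (𝕜 := ℝ) (x := v - w) |>.mp h0'
  exact sub_eq_zero.mp this

/-- Existence of a 1-Lipschitz metric projection with variational characterization. -/
lemma exists_proj {K : Set E} (hne : K.Nonempty) (hc : IsClosed K) (hconv : Convex ℝ K) :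
    ∃ p : E → E, (∀ x, p x ∈ K) ∧ (∀ x, ∀ y ∈ K, ⟪x - p x, y - p x⟫ ≤ 0) ∧
      LipschitzWith 1 p := by
  have hex : ∀ x : E, ∃ v, v ∈ K ∧ ∀ y ∈ K, ⟪x - v, y - v⟫ ≤ 0 := by
    intro x
    obtain ⟨v, hvK, hv⟩ := exists_norm_eq_iInf_of_complete_convex hne hc.isComplete hconv x
    exact ⟨v, hvK, (norm_eq_iInf_iff_real_inner_le_zero hconv hvK).mp hv⟩
  choose p hpK hp using hex
  refine ⟨p, hpK, hp, LipschitzWith.of_dist_le_mul fun x y => ?_⟩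
  rcases eq_or_ne (p x) (p y) with h | h
  · simp [h, dist_nonneg]
  have a := hp x (p y) (hpK y)
  have b := hp y (p x) (hpK x)
  have key : ⟪p x - p y, p x - p y⟫ ≤ ⟪x - y, p x - p y⟫ := by
    have : ⟪x - y, p x - p y⟫ - ⟪p x - p y, p x - p y⟫
        = -⟪x - p x, p y - p x⟫ - ⟪y - p y, p x - p y⟫ := by
      simp only [inner_sub_left, inner_sub_right, real_inner_comm]
      ring
    linarith
  have h1 : ‖p x - p y‖ ^ 2 ≤ ‖x - y‖ * ‖p x - p y‖ :=
    le_trans (by rw [real_inner_self_eq_norm_sq] at key; linarith [key]) (real_inner_le_norm _ _)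
  have hpos : 0 < ‖p x - p y‖ := norm_pos_iff.mpr (sub_ne_zero.mpr h)
  have : ‖p x - p y‖ ≤ ‖x - y‖ := by nlinarith
  simpa [dist_eq_norm] using this


lemma frontier_subset_image {K : Set E} (hne : K.Nonempty) (hc : IsClosed K) (hconv : Convex ℝ K)
    {ρ : ℝ} (hρ : 0 < ρ) (hsub : K ⊆ closedBall 0 ρ)
    (p : E → E) (hpK : ∀ x, p x ∈ K) (hp : ∀ x, ∀ y ∈ K, ⟪x - p x, y - p x⟫ ≤ 0)
    (hlip : LipschitzWith 1 p) :
    frontier K ⊆ p '' sphere 0 ρ := by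
  intro z hz
  have hzK : z ∈ K := hc.frontier_subset hz
  -- p fixes points of K
  have hfix : ∀ w ∈ K, p w = w := by
    intro w hw
    have := hp w w hw
    have h0 : ⟪w - p w, w - p w⟫ = 0 := le_antisymm this real_inner_self_nonneg
    exact (sub_eq_zero.mp (inner_self_eq_zero (𝕜 := ℝ) (x := w - p w) |>.mp h0)).symm
  -- sequence outside K tending to z
  have hzc : z ∈ closure Kᶜ := by
    have : z ∈ closure K ∩ closure Kᶜ := by rwa [← frontier_eq_closure_inter_closure]
    exact this.2
  obtain ⟨x, hxK, hxz⟩ := mem_closure_iff_seq_limit.mp hzc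
  -- construct points on the sphere projecting to p (x n)
  have hs : ∀ n, ∃ s ∈ sphere (0 : E) ρ, p s = p (x n) := by
    intro n
    have hne' : x n ≠ p (x n) := fun h => hxK n (by rw [h]; exact hpK (x n))
    set u : E := ‖x n - p (x n)‖⁻¹ • (x n - p (x n)) with hu
    have hnu : ‖u‖ = 1 := by
      rw [hu, norm_smul, norm_inv, norm_norm]
      rw [inv_mul_cancel₀ (norm_ne_zero_iff.mpr (sub_ne_zero.mpr hne'))]
    have hg : Continuous fun t : ℝ => ‖p (x n) + t • u‖ := by fun_prop
    have h0 : ‖p (x n) + (0:ℝ) • u‖ ≤ ρ := by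
      simpa using mem_closedBall_zero_iff.mp (hsub (hpK (x n)))
    have h1 : ρ ≤ ‖p (x n) + (2*ρ) • u‖ := by
      have := norm_sub_norm_le ((2*ρ) • u) (-(p (x n)))
      have hnp : ‖p (x n)‖ ≤ ρ := mem_closedBall_zero_iff.mp (hsub (hpK (x n)))
      rw [norm_smul, hnu, norm_neg, sub_neg_eq_add] at this
      have : ρ ≤ ‖(2*ρ) • u + p (x n)‖ := by
        rw [Real.norm_eq_abs, abs_of_pos (by linarith : (0:ℝ) < 2*ρ), mul_one] at this
        linarith
      simpa [add_comm] using this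
    obtain ⟨t, ht, hteq⟩ := intermediate_value_Icc (by linarith : (0:ℝ) ≤ 2*ρ)
      (hg.continuousOn) ⟨h0, h1⟩
    refine ⟨p (x n) + t • u, mem_sphere_zero_iff_norm.mpr hteq, ?_⟩
    refine proj_unique (hpK _) (hpK _) (hp _) ?_
    intro y hy
    have : p (x n) + t • u - p (x n) = (t * ‖x n - p (x n)‖⁻¹) • (x n - p (x n)) := by
      rw [hu, add_sub_cancel_left, smul_smul]
    rw [this, real_inner_smul_left]
    have h2 := hp (x n) y hy
    have h3 : 0 ≤ t * ‖x n - p (x n)‖⁻¹ :=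
      mul_nonneg ht.1 (inv_nonneg.mpr (norm_nonneg _))
    exact mul_nonpos_of_nonneg_of_nonpos h3 h2
  choose s hsS hsp using hs
  -- compact sphere: convergent subsequence
  obtain ⟨l, hlS, φ, hφ, hconv'⟩ := (isCompact_sphere (0:E) ρ).tendsto_subseq hsS
  refine ⟨l, hlS, ?_⟩
  have hpx : Filter.Tendsto (fun n => p (x n)) Filter.atTop (nhds z) := by
    have : Filter.Tendsto (fun n => p (x n)) Filter.atTop (nhds (p z)) :=
      (hlip.continuous.tendsto z).comp hxz
    rwa [hfix z hzK] at this
  have h1 : Filter.Tendsto (fun k => p (s (φ k))) Filter.atTop (nhds (p l)) :=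
    (hlip.continuous.tendsto l).comp hconv'
  have h2 : Filter.Tendsto (fun k => p (s (φ k))) Filter.atTop (nhds z) := by
    simp only [hsp]
    exact hpx.comp hφ.tendsto_atTop
  exact tendsto_nhds_unique h1 h2


noncomputable def circ (ρ : ℝ) : ℝ → E :=
  fun t => (ρ * Real.cos t) • EuclideanSpace.single 0 1 + (ρ * Real.sin t) • EuclideanSpace.single 1 1

lemma norm_comb (a b : ℝ) :
    ‖(a • EuclideanSpace.single 0 1 + b • EuclideanSpace.single 1 1 : E)‖
      = Real.sqrt (a^2 + b^2) := by
  rw [EuclideanSpace.norm_eq]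
  congr 1
  rw [Fin.sum_univ_two]
  simp [EuclideanSpace.single_apply, sq_abs]

lemma eq_comb (x : E) : x = (x 0) • EuclideanSpace.single 0 1 + (x 1) • EuclideanSpace.single 1 1 := by
  ext i
  fin_cases i <;> simp [EuclideanSpace.single_apply]

lemma circ_lipschitz {ρ : ℝ} (hρ : 0 ≤ ρ) : LipschitzWith ρ.toNNReal (circ ρ) := by
  apply LipschitzWith.of_dist_le_mul
  intro t s
  rw [dist_eq_norm]
  have : circ ρ t - circ ρ s = (ρ * (Real.cos t - Real.cos s)) • EuclideanSpace.single 0 1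
      + (ρ * (Real.sin t - Real.sin s)) • EuclideanSpace.single 1 1 := by
    simp only [circ]
    module
  rw [this, norm_comb]
  have key : (Real.cos t - Real.cos s)^2 + (Real.sin t - Real.sin s)^2 ≤ (t - s)^2 := by
    have h1 : (Real.cos t - Real.cos s)^2 + (Real.sin t - Real.sin s)^2
        = 2 - 2 * Real.cos (t - s) := by
      rw [Real.cos_sub]
      nlinarith [Real.sin_sq_add_cos_sq t, Real.sin_sq_add_cos_sq s]
    have h2 := Real.one_sub_sq_div_two_le_cos (x := t - s)
    nlinarith
  have : (ρ * (Real.cos t - Real.cos s))^2 + (ρ * (Real.sin t - Real.sin s))^2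
      ≤ (ρ * |t - s|)^2 := by
    rw [mul_pow, mul_pow, mul_pow, sq_abs]
    nlinarith
  calc Real.sqrt ((ρ * (Real.cos t - Real.cos s))^2 + (ρ * (Real.sin t - Real.sin s))^2)
      ≤ Real.sqrt ((ρ * |t - s|)^2) := Real.sqrt_le_sqrt this
    _ = ρ * |t - s| := Real.sqrt_sq (by positivity)
    _ = ρ.toNNReal * dist t s := by
        rw [Real.dist_eq, Real.coe_toNNReal _ hρ]

lemma sphere_subset_circ {ρ : ℝ} (hρ : 0 < ρ) :
    sphere (0 : E) ρ ⊆ circ ρ '' Set.Icc (-π) π := by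
  intro x hx
  have hn : ‖x‖ = ρ := mem_sphere_zero_iff_norm.mp hx
  set z : ℂ := ⟨x 0, x 1⟩ with hz
  have habs : ‖z‖ = ρ := by
    rw [Complex.norm_def, Complex.normSq_mk]
    have := (eq_comb x) ▸ hn
    rw [norm_comb] at this
    rw [← this]
    ring_nf
  have hz0 : z ≠ 0 := by
    intro h
    rw [h] at habs
    simp at habs
    exact hρ.ne' habs.symm
  refine ⟨Complex.arg z, ?_, ?_⟩
  · exact Set.mem_Icc_of_Ioc (Complex.arg_mem_Ioc z)
  · have hc := Complex.cos_arg hz0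
    have hs := Complex.sin_arg z
    rw [habs] at hc hs
    have e0 : ρ * Real.cos (Complex.arg z) = x 0 := by
      rw [hc]; field_simp [hz]; rfl
    have e1 : ρ * Real.sin (Complex.arg z) = x 1 := by
      rw [hs]; field_simp [hz]; rfl
    rw [circ, e0, e1]
    exact (eq_comb x).symm

lemma sphere_H1_le {ρ : ℝ} (hρ : 0 < ρ) :
    μH[1] (sphere (0 : E) ρ) ≤ ENNReal.ofReal (2 * π * ρ) := by
  calc μH[1] (sphere (0 : E) ρ) ≤ μH[1] (circ ρ '' Set.Icc (-π) π) :=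
        measure_mono (sphere_subset_circ hρ)
    _ ≤ (ρ.toNNReal : ℝ≥0∞) ^ (1:ℝ) * μH[1] (Set.Icc (-π) π) :=
        (circ_lipschitz hρ.le).hausdorffMeasure_image_le zero_le_one _
    _ = ENNReal.ofReal ρ * ENNReal.ofReal (2 * π) := by
        rw [MeasureTheory.hausdorffMeasure_real, Real.volume_Icc, ENNReal.rpow_one]
        rw [show π - -π = 2 * π by ring]
        rw [ENNReal.ofReal, ENNReal.ofReal, mul_comm]
    _ = ENNReal.ofReal (2 * π * ρ) := by
        rw [← ENNReal.ofReal_mul hρ.le]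
        ring_nf


lemma annuli_cover {r R : ℝ} (hr : 0 < r) {N : ℕ} (hN1 : 1 ≤ N) (hRN : R ≤ r * 2 ^ N)
    {x : E} (h1 : r ≤ ‖x‖) (h2 : ‖x‖ ≤ R) :
    ∃ k : Fin N, r * 2 ^ (k : ℕ) ≤ ‖x‖ ∧ ‖x‖ ≤ r * 2 ^ ((k : ℕ) + 1) := by
  have hx0 : 0 < ‖x‖ := lt_of_lt_of_le hr h1
  set t := Real.logb 2 (‖x‖ / r) with ht
  have ht0 : 0 ≤ t := Real.logb_nonneg (by norm_num) (by rw [le_div_iff₀ hr]; linarith)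
  have h2t : (2:ℝ) ^ t = ‖x‖ / r :=
    Real.rpow_logb (by norm_num) (by norm_num) (by positivity)
  set k := min ⌊t⌋₊ (N - 1) with hk
  have hkN : k < N := lt_of_le_of_lt (min_le_right _ _) (by omega)
  refine ⟨⟨k, hkN⟩, ?_, ?_⟩
  · have hk_le_t : (k : ℝ) ≤ t :=
      le_trans (by exact_mod_cast (min_le_left ⌊t⌋₊ (N-1))) (Nat.floor_le ht0)
    have hle : (2:ℝ) ^ (k : ℕ) ≤ 2 ^ t := by
      rw [← Real.rpow_natCast 2 k]
      exact Real.rpow_le_rpow_of_exponent_le one_le_two hk_le_t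
    rw [h2t] at hle
    have := (le_div_iff₀ hr).mp hle
    linarith
  · rcases le_or_gt (N - 1) ⌊t⌋₊ with hc | hc
    · have hkk : (k : ℕ) + 1 = N := by omega
      rw [hkk]
      linarith
    · have hkk : k = ⌊t⌋₊ := min_eq_left hc.le
      have htk : t < (k : ℝ) + 1 := by
        rw [hkk]
        exact_mod_cast Nat.lt_floor_add_one t
      have hle : (2:ℝ) ^ t ≤ 2 ^ ((k:ℕ) + 1 : ℕ) := by
        rw [← Real.rpow_natCast 2 (k+1)]
        refine Real.rpow_le_rpow_of_exponent_le one_le_two ?_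
        push_cast
        linarith
      rw [h2t] at hle
      have := (div_le_iff₀ hr).mp hle
      linarith


lemma frontier_ball_H1_le {T : Set E} (hTc : IsClosed T) (hTconv : Convex ℝ T)
    {ρ : ℝ} (hρ : 0 < ρ) :
    μH[1] (frontier T ∩ closedBall 0 ρ) ≤ ENNReal.ofReal (2 * π * ρ) := by
  set K : Set E := T ∩ closedBall 0 ρ with hK
  have hKc : IsClosed K := hTc.inter isClosed_closedBall
  have hsub : K ⊆ closedBall 0 ρ := inter_subset_right
  have hfsub : frontier T ∩ closedBall 0 ρ ⊆ frontier K := by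
    intro x hx
    rw [hKc.frontier_eq]
    refine ⟨⟨hTc.frontier_subset hx.1, hx.2⟩, fun hint => ?_⟩
    have : x ∈ interior T := interior_mono inter_subset_left hint
    rw [hTc.frontier_eq] at hx
    exact hx.1.2 this
  rcases K.eq_empty_or_nonempty with hKe | hne
  · have hKf : frontier K = ∅ := by rw [hKe, frontier_empty]
    have h0 : frontier T ∩ closedBall 0 ρ = ∅ :=
      eq_empty_of_subset_empty (by rw [← hKf]; exact hfsub)
    rw [h0]
    simp
  · obtain ⟨p, hpK, hp, hlip⟩ := exists_proj hne hKc (hTconv.inter (convex_closedBall _ _))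
    calc μH[1] (frontier T ∩ closedBall 0 ρ) ≤ μH[1] (frontier K) := measure_mono hfsub
      _ ≤ μH[1] (p '' sphere 0 ρ) :=
          measure_mono (frontier_subset_image hne hKc (hTconv.inter (convex_closedBall _ _)) hρ hsub p hpK hp hlip)
      _ ≤ ((1:ℝ≥0) : ℝ≥0∞) ^ (1:ℝ) * μH[1] (sphere (0:E) ρ) :=
          hlip.hausdorffMeasure_image_le zero_le_one _
      _ ≤ ENNReal.ofReal (2 * π * ρ) := by
          simpa using sphere_H1_le hρ


theorem stmt_11 (T : Set (EuclideanSpace ℝ (Fin 2))) (hTc : IsClosed T)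
    (hTconv : Convex ℝ T) (R r : ℝ) (hr : 0 < r) (hRr : r < R) :
    (∫ x in ((Metric.closedBall (0 : EuclideanSpace ℝ (Fin 2)) R \
          Metric.ball (0 : EuclideanSpace ℝ (Fin 2)) r) ∩ frontier T),
        ‖x‖⁻¹ ∂(Measure.hausdorffMeasure 1)) ≤
      4 * Real.pi * (⌈Real.logb 2 (R / r)⌉ : ℝ) := by
  set n : ℤ := ⌈Real.logb 2 (R / r)⌉ with hn
  have hdiv : 1 < R / r := (one_lt_div hr).mpr hRr
  have hlogpos : 0 < Real.logb 2 (R / r) := Real.logb_pos (by norm_num) hdiv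
  have hn1 : 1 ≤ n := by
    rw [hn]
    exact_mod_cast Int.le_ceil_iff.mpr (by simpa using hlogpos)
  set N : ℕ := n.toNat with hN
  have hN1 : 1 ≤ N := by omega
  have hNn : (N : ℝ) = (n : ℝ) := by
    rw [hN]; exact_mod_cast Int.toNat_of_nonneg (by omega)
  have hRN : R ≤ r * 2 ^ N := by
    have h1 : Real.logb 2 (R / r) ≤ (N : ℝ) := by
      rw [hNn]; exact_mod_cast Int.le_ceil _
    have h2 : R / r ≤ (2:ℝ) ^ (N:ℝ) := by
      calc R / r = (2:ℝ) ^ Real.logb 2 (R / r) :=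
            (Real.rpow_logb (by norm_num) (by norm_num) (by positivity)).symm
        _ ≤ (2:ℝ) ^ (N:ℝ) := Real.rpow_le_rpow_of_exponent_le one_le_two h1
    rw [Real.rpow_natCast] at h2
    calc R = (R / r) * r := by field_simp
      _ ≤ (2:ℝ) ^ N * r := by nlinarith
      _ = r * 2 ^ N := by ring
  set S : Set E := (closedBall (0:E) R \ ball (0:E) r) ∩ frontier T with hS
  set A : Fin N → Set E := fun k =>
    (closedBall (0:E) (r * 2 ^ ((k:ℕ)+1)) \ ball (0:E) (r * 2 ^ (k:ℕ))) ∩ frontier T with hA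
  -- lintegral bound
  have hcov : S ⊆ ⋃ k : Fin N, A k := by
    intro x hx
    obtain ⟨⟨hx1, hx2⟩, hxf⟩ := hx
    rw [mem_closedBall_zero_iff] at hx1
    rw [mem_ball_zero_iff, not_lt] at hx2
    obtain ⟨k, hk1, hk2⟩ := annuli_cover hr hN1 hRN hx2 hx1
    exact Set.mem_iUnion.mpr ⟨k, ⟨mem_closedBall_zero_iff.mpr hk2,
      fun h => absurd (mem_ball_zero_iff.mp h) (not_lt.mpr hk1)⟩, hxf⟩
  have hAmeas : ∀ k : Fin N, MeasurableSet (A k) := fun k =>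
    (((isClosed_closedBall.measurableSet).diff measurableSet_ball)).inter
      isClosed_frontier.measurableSet
  have hAbound : ∀ k : Fin N,
      (∫⁻ x in A k, ENNReal.ofReal ‖x‖⁻¹ ∂μH[1]) ≤ ENNReal.ofReal (4 * π) := by
    intro k
    have hρk : (0:ℝ) < r * 2 ^ (k:ℕ) := by positivity
    have hρk1 : (0:ℝ) < r * 2 ^ ((k:ℕ)+1) := by positivity
    have hub : ∀ᵐ x ∂(μH[1].restrict (A k)),
        ENNReal.ofReal ‖x‖⁻¹ ≤ ENNReal.ofReal ((r * 2 ^ (k:ℕ))⁻¹) := by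
      filter_upwards [ae_restrict_mem (hAmeas k)] with x hx
      have : r * 2 ^ (k:ℕ) ≤ ‖x‖ := by
        have := hx.1.2
        rwa [mem_ball_zero_iff, not_lt] at this
      exact ENNReal.ofReal_le_ofReal (inv_anti₀ hρk this)
    calc (∫⁻ x in A k, ENNReal.ofReal ‖x‖⁻¹ ∂μH[1])
        ≤ ∫⁻ _ in A k, ENNReal.ofReal ((r * 2 ^ (k:ℕ))⁻¹) ∂μH[1] := lintegral_mono_ae hub
      _ = ENNReal.ofReal ((r * 2 ^ (k:ℕ))⁻¹) * μH[1] (A k) := setLIntegral_const _ _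
      _ ≤ ENNReal.ofReal ((r * 2 ^ (k:ℕ))⁻¹) *
            ENNReal.ofReal (2 * π * (r * 2 ^ ((k:ℕ)+1))) := by
          refine mul_le_mul_right ?_ _
          refine le_trans (measure_mono ?_) (frontier_ball_H1_le hTc hTconv hρk1)
          intro x hx
          exact ⟨hx.2, hx.1.1⟩
      _ = ENNReal.ofReal (4 * π) := by
          rw [← ENNReal.ofReal_mul (by positivity)]
          congr 1
          have h2 : (2:ℝ) ^ ((k:ℕ)+1) = 2 * 2 ^ (k:ℕ) := by ring
          field_simp [h2]
          ring
  have hlint : (∫⁻ x in S, ENNReal.ofReal ‖x‖⁻¹ ∂μH[1]) ≤ N * ENNReal.ofReal (4 * π) := by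
    calc (∫⁻ x in S, ENNReal.ofReal ‖x‖⁻¹ ∂μH[1])
        ≤ ∫⁻ x in ⋃ k : Fin N, A k, ENNReal.ofReal ‖x‖⁻¹ ∂μH[1] :=
          lintegral_mono_set hcov
      _ ≤ ∑' k : Fin N, ∫⁻ x in A k, ENNReal.ofReal ‖x‖⁻¹ ∂μH[1] := lintegral_iUnion_le _ _
      _ = ∑ k : Fin N, ∫⁻ x in A k, ENNReal.ofReal ‖x‖⁻¹ ∂μH[1] := tsum_fintype _
      _ ≤ ∑ _k : Fin N, ENNReal.ofReal (4 * π) := Finset.sum_le_sum fun k _ => hAbound k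
      _ = N * ENNReal.ofReal (4 * π) := by
          rw [Finset.sum_const, Finset.card_univ, Fintype.card_fin, nsmul_eq_mul]
  -- Bochner integral bound
  have hbound : (∫ x in S, ‖x‖⁻¹ ∂μH[1]) ≤ ((N : ℝ≥0∞) * ENNReal.ofReal (4 * π)).toReal := by
    refine le_trans (le_abs_self _) ?_
    rw [← Real.norm_eq_abs]
    refine le_trans (norm_integral_le_lintegral_norm _) ?_
    have heq : (∫⁻ x in S, ENNReal.ofReal ‖‖x‖⁻¹‖ ∂μH[1])
        = ∫⁻ x in S, ENNReal.ofReal ‖x‖⁻¹ ∂μH[1] := by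
      congr 1
      funext x
      rw [Real.norm_eq_abs, abs_of_nonneg (by positivity)]
    rw [heq]
    exact ENNReal.toReal_mono (by simp [ENNReal.mul_ne_top]) hlint
  refine le_trans hbound ?_
  rw [ENNReal.toReal_mul, ENNReal.toReal_ofReal (by positivity)]
  rw [ENNReal.toReal_natCast, hNn]
  ring_nf
  exact le_refl _
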